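/- Let p be prime, H ≤ F_p^* a multiplicative subgroup with |H| < p^{1/2}, N = {L+1,...,L+N} an interval of N consecutive integers, and a coprime to p. Assume J(N,H) ≤ p^{o(1)}(|H|^2 + N|H| + N^2|H|^2/p + N|H|^{7/4}/p^{1/4}) and T_2(H) ≪ |H|^{49/20} log^{1/5}|H|. Then ∑_{n∈N} |∑_{x∈H} e_p(anx)| ≤ N|H| · Δ1^{1/4} · p^{o(1)}, where Δ1 = (p / (N |H|^{2+11/20})) · Γ(N,H) and Γ(N,H) = 1 + |H|/N + N|H|/p + |H|^{3/4}/p^{1/4}. -/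

import Mathlib

open scoped Classical

/-- `ep p z = exp(2πi z/p)`, where `z ∈ F_p` is lifted to `{0,...,p-1}`. -/
noncomputable def ep (p : ℕ) (z : ZMod p) : ℂ :=
  Complex.exp (2 * Real.pi * Complex.I * z.val / p)

/-- number of `2m`-tuples in `H^{2m}` with `h₁+⋯+h_m ≡ h_{m+1}+⋯+h_{2m} (mod p)`. -/
noncomputable def T (p m : ℕ) (H : Subgroup (ZMod p)ˣ) : ℕ :=
  Nat.card {t : (Fin m → H) × (Fin m → H) //
    (∑ i, ((t.1 i : (ZMod p)ˣ) : ZMod p)) = ∑ i, ((t.2 i : (ZMod p)ˣ) : ZMod p)}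

/-- number of quadruples `(n₁,n₂,h₁,h₂) ∈ 𝒩² × H²` with `n₁h₁ ≡ n₂h₂ (mod p)`,
where `𝒩 = {L+1,...,L+N}`. -/
noncomputable def J (p : ℕ) (L : ℤ) (N : ℕ) (H : Subgroup (ZMod p)ˣ) : ℕ :=
  Nat.card {q : (ℤ × ℤ) × H × H //
    q.1.1 ∈ Finset.Icc (L + 1) (L + N) ∧ q.1.2 ∈ Finset.Icc (L + 1) (L + N) ∧
      (q.1.1 : ZMod p) * ((q.2.1 : (ZMod p)ˣ) : ZMod p)
        = (q.1.2 : ZMod p) * ((q.2.2 : (ZMod p)ˣ) : ZMod p)}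

section aux

lemma ep_eq_pow (p : ℕ) (z : ZMod p) :
    ep p z = Complex.exp (2 * Real.pi * Complex.I / p) ^ z.val := by
  rw [← Complex.exp_nat_mul, ep]
  ring_nf

variable (p : ℕ) [Fact p.Prime]

lemma zeta_orderOf : orderOf (Complex.exp (2 * Real.pi * Complex.I / p)) = p :=
  ((Complex.isPrimitiveRoot_exp p (Fact.out : p.Prime).ne_zero).eq_orderOf).symm

lemma ep_add (x y : ZMod p) : ep p (x + y) = ep p x * ep p y := by
  haveI : NeZero p := ⟨(Fact.out : p.Prime).ne_zero⟩
  have h := pow_mod_orderOf (Complex.exp (2 * Real.pi * Complex.I / p)) (x.val + y.val)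
  rw [zeta_orderOf] at h
  rw [ep_eq_pow, ep_eq_pow, ep_eq_pow, ← pow_add, ZMod.val_add, h]

lemma ep_zero : ep p 0 = 1 := by
  haveI : NeZero p := ⟨(Fact.out : p.Prime).ne_zero⟩
  simp [ep, ZMod.val_zero]

lemma ep_neg_mul (z : ZMod p) : ep p (-z) * ep p z = 1 := by
  rw [← ep_add]; simp [ep_zero]

lemma ep_conj (z : ZMod p) : (starRingEnd ℂ) (ep p z) = ep p (-z) := by
  have h1 : (starRingEnd ℂ) (ep p z) * ep p z = 1 := by
    rw [ep, ← Complex.exp_conj, ← Complex.exp_add]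
    simp only [map_div₀, map_mul, Complex.conj_I, Complex.conj_ofReal, map_ofNat,
      Complex.conj_natCast]
    ring_nf
    rw [Complex.exp_zero]
  exact (eq_inv_of_mul_eq_one_left h1).trans (eq_inv_of_mul_eq_one_left (ep_neg_mul p z)).symm

lemma ep_sum_eq_zero : ∑ r : ZMod p, ep p r = 0 := by
  have hp : 1 < p := (Fact.out : p.Prime).one_lt
  haveI : NeZero p := ⟨(Fact.out : p.Prime).ne_zero⟩
  have key := (Complex.isPrimitiveRoot_exp p (Fact.out : p.Prime).ne_zero).geom_sum_eq_zero hp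
  rw [← key]
  refine Finset.sum_nbij' (fun r => r.val) (fun k => (k : ZMod p)) ?_ ?_ ?_ ?_ ?_
  · intro r _; exact Finset.mem_range.2 (ZMod.val_lt r)
  · intro k _; exact Finset.mem_univ _
  · intro r _; exact ZMod.natCast_zmod_val r
  · intro k hk; exact ZMod.val_cast_of_lt (Finset.mem_range.1 hk)
  · intro r _; rw [ep_eq_pow]

lemma ep_sum (c : ZMod p) : ∑ r : ZMod p, ep p (c * r) = if c = 0 then (p : ℂ) else 0 := by
  haveI : NeZero p := ⟨(Fact.out : p.Prime).ne_zero⟩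
  split_ifs with hc
  · subst hc; simp [ep_zero, Finset.card_univ, ZMod.card]
  · rw [← ep_sum_eq_zero p]
    exact Fintype.sum_equiv (Equiv.mulLeft₀ c hc) _ _ (fun r => rfl)

variable (H : Subgroup (ZMod p)ˣ) (a : (ZMod p)ˣ)

lemma T_two_eq_card : T p 2 H = (Finset.univ.filter
    (fun q : (H × H) × (H × H) =>
      ((q.1.1 : (ZMod p)ˣ) : ZMod p) + ((q.1.2 : (ZMod p)ˣ) : ZMod p)
        = ((q.2.1 : (ZMod p)ˣ) : ZMod p) + ((q.2.2 : (ZMod p)ˣ) : ZMod p))).card := by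
  rw [T, Nat.card_eq_fintype_card, ← Fintype.card_subtype]
  exact Fintype.card_congr (Equiv.subtypeEquiv
    (Equiv.prodCongr (finTwoArrowEquiv _) (finTwoArrowEquiv _))
    (fun t => by simp [Fin.sum_univ_two, finTwoArrowEquiv]))

lemma sum_abs_pow_four :
    ∑ r : ZMod p, (‖∑ x : H, ep p ((a : ZMod p) * r * ((x : (ZMod p)ˣ) : ZMod p))‖) ^ 4
      = (p : ℝ) * (T p 2 H) := by
  set Tc : ZMod p → ℂ := fun r => ∑ x : H, ep p ((a : ZMod p) * r * ((x : (ZMod p)ˣ) : ZMod p))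
    with hTc
  have sq_expand : ∀ r, Tc r ^ 2 = ∑ y : H × H,
      ep p ((a : ZMod p) * (((y.1 : (ZMod p)ˣ) : ZMod p) + ((y.2 : (ZMod p)ˣ) : ZMod p)) * r) := by
    intro r
    rw [sq, hTc, Finset.sum_mul_sum, ← Fintype.sum_prod_type']
    refine Fintype.sum_congr _ _ fun y => ?_
    rw [← ep_add]
    congr 1
    ring
  have key : ∀ r, ((‖Tc r‖) ^ 4 : ℂ)
      = ∑ q : (H × H) × (H × H),
          ep p (((a : ZMod p) * ((((q.1.1 : (ZMod p)ˣ) : ZMod p) + ((q.1.2 : (ZMod p)ˣ) : ZMod p))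
            - (((q.2.1 : (ZMod p)ˣ) : ZMod p) + ((q.2.2 : (ZMod p)ˣ) : ZMod p)))) * r) := by
    intro r
    have h1 : ((‖Tc r‖) ^ 4 : ℂ) = Tc r ^ 2 * (starRingEnd ℂ) (Tc r ^ 2) := by
      rw [Complex.mul_conj, Complex.normSq_eq_norm_sq, norm_pow]
      push_cast
      ring
    rw [h1, sq_expand, map_sum, Finset.sum_mul_sum, ← Fintype.sum_prod_type']
    refine Fintype.sum_congr _ _ fun q => ?_
    rw [ep_conj, ← ep_add]
    congr 1
    ring
  have main : ((∑ r : ZMod p, (‖Tc r‖) ^ 4 : ℝ) : ℂ)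
      = (p : ℂ) * ((Finset.univ.filter
          (fun q : (H × H) × (H × H) =>
            ((q.1.1 : (ZMod p)ˣ) : ZMod p) + ((q.1.2 : (ZMod p)ˣ) : ZMod p)
              = ((q.2.1 : (ZMod p)ˣ) : ZMod p) + ((q.2.2 : (ZMod p)ˣ) : ZMod p))).card : ℂ) := by
    push_cast
    calc ∑ r : ZMod p, ((‖Tc r‖) ^ 4 : ℂ)
        = ∑ r : ZMod p, ∑ q : (H × H) × (H × H),
            ep p (((a : ZMod p) * ((((q.1.1 : (ZMod p)ˣ) : ZMod p) + ((q.1.2 : (ZMod p)ˣ) : ZMod p))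
              - (((q.2.1 : (ZMod p)ˣ) : ZMod p) + ((q.2.2 : (ZMod p)ˣ) : ZMod p)))) * r) :=
          Finset.sum_congr rfl fun r _ => key r
      _ = ∑ q : (H × H) × (H × H), ∑ r : ZMod p,
            ep p (((a : ZMod p) * ((((q.1.1 : (ZMod p)ˣ) : ZMod p) + ((q.1.2 : (ZMod p)ˣ) : ZMod p))
              - (((q.2.1 : (ZMod p)ˣ) : ZMod p) + ((q.2.2 : (ZMod p)ˣ) : ZMod p)))) * r) :=
          Finset.sum_comm
      _ = ∑ q : (H × H) × (H × H),
            (if ((q.1.1 : (ZMod p)ˣ) : ZMod p) + ((q.1.2 : (ZMod p)ˣ) : ZMod p)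
              = ((q.2.1 : (ZMod p)ˣ) : ZMod p) + ((q.2.2 : (ZMod p)ˣ) : ZMod p)
              then (p : ℂ) else 0) := by
          refine Fintype.sum_congr _ _ fun q => ?_
          rw [ep_sum]
          congr 1
          rw [mul_eq_zero, sub_eq_zero]
          simp [Units.ne_zero a]
      _ = ∑ q ∈ Finset.univ.filter
            (fun q : (H × H) × (H × H) =>
              ((q.1.1 : (ZMod p)ˣ) : ZMod p) + ((q.1.2 : (ZMod p)ˣ) : ZMod p)
                = ((q.2.1 : (ZMod p)ˣ) : ZMod p) + ((q.2.2 : (ZMod p)ˣ) : ZMod p)), (p : ℂ) :=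
          (Finset.sum_filter _ _).symm
      _ = _ := by rw [Finset.sum_const, nsmul_eq_mul]; ring
  have h2 : (∑ r : ZMod p, (‖Tc r‖) ^ 4 : ℝ)
      = (p : ℝ) * ((Finset.univ.filter
          (fun q : (H × H) × (H × H) =>
            ((q.1.1 : (ZMod p)ˣ) : ZMod p) + ((q.1.2 : (ZMod p)ˣ) : ZMod p)
              = ((q.2.1 : (ZMod p)ˣ) : ZMod p) + ((q.2.2 : (ZMod p)ˣ) : ZMod p))).card : ℝ) := by
    exact_mod_cast main
  rw [h2, T_two_eq_card p H]

end aux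

noncomputable def AA (p : ℕ) [NeZero p] (L : ℤ) (N : ℕ) (H : Subgroup (ZMod p)ˣ) :
    Finset (ℤ × H) :=
  (Finset.Icc (L + 1) (L + N)) ×ˢ Finset.univ

noncomputable def g (p : ℕ) (H : Subgroup (ZMod p)ˣ) (q : ℤ × H) : ZMod p :=
  (q.1 : ZMod p) * ((q.2 : (ZMod p)ˣ) : ZMod p)

noncomputable def w (p : ℕ) [NeZero p] (L : ℤ) (N : ℕ) (H : Subgroup (ZMod p)ˣ) (r : ZMod p) :
    ℕ :=
  ((AA p L N H).filter (fun q => g p H q = r)).card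

noncomputable def F (p : ℕ) (H : Subgroup (ZMod p)ˣ) (a : (ZMod p)ˣ) [NeZero p] (r : ZMod p) :
    ℝ :=
  ‖∑ x : H, ep p ((a : ZMod p) * r * ((x : (ZMod p)ˣ) : ZMod p))‖

section aux2
variable (p : ℕ) [Fact p.Prime] (L : ℤ) (N : ℕ) (H : Subgroup (ZMod p)ˣ) (a : (ZMod p)ˣ)

lemma sum_w : ∑ r : ZMod p, w p L N H r = N * Nat.card H := by
  unfold w
  simp only [Finset.card_eq_sum_ones]
  rw [Finset.sum_fiberwise (AA p L N H) (g p H) (fun _ => 1)]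
  unfold AA
  rw [← Finset.card_eq_sum_ones, Finset.card_product, Int.card_Icc, Finset.card_univ,
    Nat.card_eq_fintype_card]
  congr 1
  omega

lemma sum_w_sq : ∑ r : ZMod p, (w p L N H r) ^ 2 = J p L N H := by
  classical
  set A := AA p L N H with hA
  set B := ((A ×ˢ A).filter (fun y : (ℤ × H) × (ℤ × H) => g p H y.1 = g p H y.2)) with hB
  have fib : ∀ r : ZMod p, B.filter (fun y => g p H y.1 = r)
      = (A.filter (fun q => g p H q = r)) ×ˢ (A.filter (fun q => g p H q = r)) := by
    intro r
    ext y
    simp only [hB, Finset.mem_filter, Finset.mem_product]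
    constructor
    · rintro ⟨⟨⟨h1, h2⟩, h3⟩, h4⟩
      exact ⟨⟨h1, h4⟩, ⟨h2, h3 ▸ h4⟩⟩
    · rintro ⟨⟨h1, h4⟩, ⟨h2, h5⟩⟩
      exact ⟨⟨⟨h1, h2⟩, h4.trans h5.symm⟩, h4⟩
  have hcard : ∑ r : ZMod p, (w p L N H r) ^ 2 = B.card := by
    rw [Finset.card_eq_sum_ones B, ← Finset.sum_fiberwise B (fun y => g p H y.1) (fun _ => 1)]
    refine Finset.sum_congr rfl fun r _ => ?_
    rw [← Finset.card_eq_sum_ones, fib r, Finset.card_product, w, sq, hA]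
  rw [hcard, J]
  have e : {q : (ℤ × ℤ) × H × H //
      q.1.1 ∈ Finset.Icc (L + 1) (L + N) ∧ q.1.2 ∈ Finset.Icc (L + 1) (L + N) ∧
        (q.1.1 : ZMod p) * ((q.2.1 : (ZMod p)ˣ) : ZMod p)
          = (q.1.2 : ZMod p) * ((q.2.2 : (ZMod p)ˣ) : ZMod p)} ≃ {y // y ∈ B} := by
    refine ⟨fun q => ⟨((q.1.1.1, q.1.2.1), (q.1.1.2, q.1.2.2)), ?_⟩,
      fun y => ⟨((y.1.1.1, y.1.2.1), (y.1.1.2, y.1.2.2)), ?_⟩, fun q => rfl, fun y => rfl⟩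
    · obtain ⟨hn1, hn2, heq⟩ := q.2
      simp only [hB, Finset.mem_filter, Finset.mem_product, hA, AA, Finset.mem_product,
        Finset.mem_univ, and_true]
      exact ⟨⟨hn1, hn2⟩, heq⟩
    · have hy := y.2
      simp only [hB, Finset.mem_filter, Finset.mem_product, hA, AA, Finset.mem_product,
        Finset.mem_univ, and_true] at hy
      exact ⟨hy.1.1, hy.1.2, hy.2⟩
  rw [Nat.card_congr e, Nat.card_eq_fintype_card, Fintype.card_coe]

lemma inv_F (r : ZMod p) (h : H) :
    F p H a (r * ((h : (ZMod p)ˣ) : ZMod p)) = F p H a r := by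
  unfold F
  congr 1
  refine Fintype.sum_equiv (Equiv.mulLeft h) _ _ fun x => ?_
  simp only [Equiv.coe_mulLeft]
  congr 1
  rw [Subgroup.coe_mul, Units.val_mul]
  ring

lemma regroup :
    ∑ r : ZMod p, (w p L N H r : ℝ) * F p H a r
      = (Nat.card H : ℝ) * ∑ n ∈ Finset.Icc (L + 1) (L + N), F p H a ((n : ZMod p)) := by
  have step1 : ∀ r : ZMod p, (w p L N H r : ℝ) * F p H a r
      = ∑ q ∈ (AA p L N H).filter (fun q => g p H q = r), F p H a (g p H q) := by
    intro r
    have h1 : ∑ q ∈ (AA p L N H).filter (fun q => g p H q = r), F p H a (g p H q)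
        = ∑ _q ∈ (AA p L N H).filter (fun q => g p H q = r), F p H a r :=
      Finset.sum_congr rfl (fun q hq => by rw [(Finset.mem_filter.1 hq).2])
    rw [h1, Finset.sum_const, nsmul_eq_mul, w]
  calc ∑ r : ZMod p, (w p L N H r : ℝ) * F p H a r
      = ∑ r : ZMod p, ∑ q ∈ (AA p L N H).filter (fun q => g p H q = r), F p H a (g p H q) :=
        Finset.sum_congr rfl fun r _ => step1 r
    _ = ∑ q ∈ AA p L N H, F p H a (g p H q) := Finset.sum_fiberwise _ _ _
    _ = ∑ n ∈ Finset.Icc (L + 1) (L + N), ∑ x : H,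
          F p H a ((n : ZMod p) * ((x : (ZMod p)ˣ) : ZMod p)) := by
        rw [AA, Finset.sum_product]
        simp [g]
    _ = ∑ n ∈ Finset.Icc (L + 1) (L + N), (Nat.card H : ℝ) * F p H a ((n : ZMod p)) := by
        refine Finset.sum_congr rfl fun n _ => ?_
        rw [Finset.sum_congr rfl (fun x _ => inv_F p H a (n : ZMod p) x), Finset.sum_const,
          nsmul_eq_mul, Finset.card_univ, Nat.card_eq_fintype_card]
    _ = _ := by rw [← Finset.mul_sum]

lemma sum_F_pow_four :
    ∑ r : ZMod p, (F p H a r) ^ 4 = (p : ℝ) * (T p 2 H) := by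
  unfold F
  exact sum_abs_pow_four p H a

end aux2

theorem stmt_13 (CJ C₂ : ℝ) (hCJ : 0 < CJ) (hC₂ : 0 < C₂) :
    ∀ ε > (0 : ℝ), ∃ C > (0 : ℝ),
      ∀ (p : ℕ) [Fact p.Prime] (L : ℤ) (N : ℕ) (H : Subgroup (ZMod p)ˣ) (a : (ZMod p)ˣ),
      (Nat.card H : ℝ) < (p : ℝ) ^ ((1 : ℝ) / 2) →
      -- hypothesis on `J(𝒩, H)`
      (J p L N H : ℝ) ≤ CJ * (p : ℝ) ^ ε *
          ((Nat.card H : ℝ) ^ (2 : ℕ) + N * (Nat.card H : ℝ)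
            + (N : ℝ) ^ (2 : ℕ) * (Nat.card H : ℝ) ^ (2 : ℕ) / p
            + N * (Nat.card H : ℝ) ^ ((7 : ℝ) / 4) / (p : ℝ) ^ ((1 : ℝ) / 4)) →
      -- hypothesis on `T₂(H)`
      (T p 2 H : ℝ) ≤ C₂ * (Nat.card H : ℝ) ^ ((49 : ℝ) / 20)
          * (Real.log (Nat.card H)) ^ ((1 : ℝ) / 5) →
      (∑ n ∈ Finset.Icc (L + 1) (L + N),
          ‖(∑ x : H,
            ep p ((a : ZMod p) * (n : ZMod p) * ((x : (ZMod p)ˣ) : ZMod p)))‖)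
        ≤ C * N * (Nat.card H : ℝ)
            * (((p : ℝ) / (N * (Nat.card H : ℝ) ^ ((2 : ℝ) + 11 / 20)))
              * (1 + (Nat.card H : ℝ) / N + N * (Nat.card H : ℝ) / p
                  + (Nat.card H : ℝ) ^ ((3 : ℝ) / 4) / (p : ℝ) ^ ((1 : ℝ) / 4)))
              ^ ((1 : ℝ) / 4)
            * (p : ℝ) ^ ε := by
  intro ε hε
  set K : ℝ := CJ * C₂ / (15 * ε) ^ ((1 : ℝ) / 5) with hKdef
  have h15 : (0 : ℝ) < (15 * ε) ^ ((1 : ℝ) / 5) := Real.rpow_pos_of_pos (by linarith) _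
  have hK0 : 0 < K := by positivity
  refine ⟨max 1 (K ^ ((1 : ℝ) / 4)), lt_of_lt_of_le one_pos (le_max_left _ _), ?_⟩
  intro p _ L N H a hH hJb hTb
  set C : ℝ := max 1 (K ^ ((1 : ℝ) / 4)) with hCdef
  set h : ℝ := (Nat.card H : ℝ) with hhdef
  set P : ℝ := (p : ℝ) with hPdef
  have hp2 : (2 : ℝ) ≤ P := by rw [hPdef]; exact_mod_cast (Fact.out : p.Prime).two_le
  have hP0 : (0 : ℝ) < P := by linarith
  have hP1 : (1 : ℝ) ≤ P := by linarith
  have hh1 : (1 : ℝ) ≤ h := by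
    have : 0 < Nat.card H := Nat.card_pos
    rw [hhdef]
    exact_mod_cast this
  have hh0 : (0 : ℝ) < h := lt_of_lt_of_le one_pos hh1
  have hC4 : K ≤ C ^ (4 : ℕ) := by
    calc K = (K ^ ((1 : ℝ) / 4)) ^ (4 : ℕ) := by
          rw [← Real.rpow_natCast (K ^ ((1 : ℝ) / 4)) 4, ← Real.rpow_mul hK0.le]
          norm_num
      _ ≤ C ^ (4 : ℕ) := pow_le_pow_left₀ (Real.rpow_nonneg hK0.le _) (le_max_right _ _) 4
  rcases Nat.eq_zero_or_pos N with hN0 | hN0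
  · subst hN0
    rw [show L + ((0 : ℕ) : ℤ) = L by simp, Finset.Icc_eq_empty (by omega), Finset.sum_empty]
    simp
  -- main case
  set n : ℝ := (N : ℝ) with hndef
  have hn1 : (1 : ℝ) ≤ n := by rw [hndef]; exact_mod_cast hN0
  have hn0 : (0 : ℝ) < n := lt_of_lt_of_le one_pos hn1
  set Γ : ℝ := 1 + h / n + n * h / P + h ^ ((3 : ℝ) / 4) / P ^ ((1 : ℝ) / 4) with hΓdef
  have hΓ0 : (0 : ℝ) ≤ Γ := by positivity
  set Δ : ℝ := P / (n * h ^ ((2 : ℝ) + 11 / 20)) * Γ with hΔdef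
  have hΔ0 : (0 : ℝ) ≤ Δ := by positivity
  show (∑ m ∈ Finset.Icc (L + 1) (L + N), F p H a ((m : ZMod p)))
      ≤ C * n * h * Δ ^ ((1 : ℝ) / 4) * P ^ ε
  set S : ℝ := ∑ m ∈ Finset.Icc (L + 1) (L + N), F p H a ((m : ZMod p)) with hSdef
  have hS0 : 0 ≤ S := Finset.sum_nonneg fun m _ => norm_nonneg _
  -- Cauchy–Schwarz, twice
  have cs1 : (∑ r : ZMod p, (w p L N H r : ℝ) * F p H a r) ^ 2
      ≤ (∑ r : ZMod p, (w p L N H r : ℝ))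
        * (∑ r : ZMod p, (w p L N H r : ℝ) * (F p H a r) ^ 2) := by
    have key := Finset.sum_mul_sq_le_sq_mul_sq Finset.univ
      (fun r : ZMod p => Real.sqrt (w p L N H r))
      (fun r : ZMod p => Real.sqrt (w p L N H r) * F p H a r)
    have e1 : ∀ r : ZMod p, Real.sqrt (w p L N H r)
        * (Real.sqrt (w p L N H r) * F p H a r) = (w p L N H r : ℝ) * F p H a r := by
      intro r
      rw [← mul_assoc, Real.mul_self_sqrt (by positivity)]
    have e2 : ∀ r : ZMod p, (Real.sqrt (w p L N H r)) ^ 2 = (w p L N H r : ℝ) := by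
      intro r
      exact Real.sq_sqrt (by positivity)
    have e3 : ∀ r : ZMod p, (Real.sqrt (w p L N H r) * F p H a r) ^ 2
        = (w p L N H r : ℝ) * (F p H a r) ^ 2 := by
      intro r
      rw [mul_pow, e2]
    simpa only [e1, e2, e3] using key
  have cs2 : (∑ r : ZMod p, (w p L N H r : ℝ) * (F p H a r) ^ 2) ^ 2
      ≤ (∑ r : ZMod p, ((w p L N H r : ℝ)) ^ 2) * (∑ r : ZMod p, (F p H a r) ^ 4) := by
    have key := Finset.sum_mul_sq_le_sq_mul_sq Finset.univ
      (fun r : ZMod p => (w p L N H r : ℝ)) (fun r : ZMod p => (F p H a r) ^ 2)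
    have e4 : ∀ r : ZMod p, ((F p H a r) ^ 2) ^ 2 = (F p H a r) ^ 4 := fun r => by ring
    simpa only [e4] using key
  have hsw : ∑ r : ZMod p, (w p L N H r : ℝ) = n * h := by
    rw [← Nat.cast_sum, sum_w p L N H]
    push_cast
    ring
  have hswsq : ∑ r : ZMod p, ((w p L N H r : ℝ)) ^ 2 = (J p L N H : ℝ) := by
    rw [← sum_w_sq p L N H]
    push_cast
    ring
  have hreg : ∑ r : ZMod p, (w p L N H r : ℝ) * F p H a r = h * S := regroup p L N H a
  have big : (h * S) ^ (4 : ℕ)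
      ≤ (n * h) ^ (2 : ℕ) * (J p L N H : ℝ) * (P * (T p 2 H : ℝ)) := by
    have step1 : (h * S) ^ 2
        ≤ (n * h) * (∑ r : ZMod p, (w p L N H r : ℝ) * (F p H a r) ^ 2) := by
      rw [← hreg, ← hsw]
      exact cs1
    have hnn : (0 : ℝ) ≤ (h * S) ^ 2 := sq_nonneg _
    calc (h * S) ^ (4 : ℕ) = ((h * S) ^ 2) ^ 2 := by ring
      _ ≤ ((n * h) * (∑ r : ZMod p, (w p L N H r : ℝ) * (F p H a r) ^ 2)) ^ 2 :=
          pow_le_pow_left₀ hnn step1 2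
      _ = (n * h) ^ (2 : ℕ)
            * (∑ r : ZMod p, (w p L N H r : ℝ) * (F p H a r) ^ 2) ^ 2 := by ring
      _ ≤ (n * h) ^ (2 : ℕ)
            * ((J p L N H : ℝ) * (∑ r : ZMod p, (F p H a r) ^ 4)) := by
          refine mul_le_mul_of_nonneg_left ?_ (by positivity)
          rw [← hswsq]
          exact cs2
      _ = (n * h) ^ (2 : ℕ) * (J p L N H : ℝ) * (∑ r : ZMod p, (F p H a r) ^ 4) := by ring
      _ = (n * h) ^ (2 : ℕ) * (J p L N H : ℝ) * (P * (T p 2 H : ℝ)) := by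
          rw [sum_F_pow_four p H a]
  -- bounds on J and T₂
  have hmul74 : h * h ^ ((3 : ℝ) / 4) = h ^ ((7 : ℝ) / 4) := by
    nth_rewrite 1 [← Real.rpow_one h]
    rw [← Real.rpow_add hh0]
    norm_num
  have hJ2 : (J p L N H : ℝ) ≤ CJ * P ^ ε * (n * h * Γ) := by
    refine hJb.trans (le_of_eq ?_)
    have hexp : h ^ (2 : ℕ) + n * h + n ^ (2 : ℕ) * h ^ (2 : ℕ) / P
        + n * h ^ ((7 : ℝ) / 4) / P ^ ((1 : ℝ) / 4) = n * h * Γ := by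
      rw [hΓdef, ← hmul74]
      field_simp
      ring
    rw [hexp]
  have hhP : h ≤ P := by
    refine le_of_lt (lt_of_lt_of_le hH ?_)
    calc P ^ ((1 : ℝ) / 2) ≤ P ^ (1 : ℝ) :=
          Real.rpow_le_rpow_of_exponent_le hP1 (by norm_num)
      _ = P := Real.rpow_one P
  have hlog : (Real.log h) ^ ((1 : ℝ) / 5) ≤ P ^ (3 * ε) / (15 * ε) ^ ((1 : ℝ) / 5) := by
    have l1 : Real.log h ≤ Real.log P := Real.log_le_log hh0 hhP
    have l2 : Real.log P ≤ P ^ (15 * ε) / (15 * ε) := by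
      have e : Real.log P = Real.log (P ^ (15 * ε)) / (15 * ε) := by
        rw [Real.log_rpow hP0]
        field_simp
      rw [e]
      have : Real.log (P ^ (15 * ε)) ≤ P ^ (15 * ε) := by
        have h1 := Real.log_le_sub_one_of_pos (Real.rpow_pos_of_pos hP0 (15 * ε))
        linarith
      exact (div_le_div_iff_of_pos_right (by linarith : (0 : ℝ) < 15 * ε)).mpr this
    have l3 : 0 ≤ Real.log h := Real.log_nonneg hh1
    calc (Real.log h) ^ ((1 : ℝ) / 5) ≤ (P ^ (15 * ε) / (15 * ε)) ^ ((1 : ℝ) / 5) :=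
          Real.rpow_le_rpow l3 (l1.trans l2) (by norm_num)
      _ = P ^ (3 * ε) / (15 * ε) ^ ((1 : ℝ) / 5) := by
          rw [Real.div_rpow (Real.rpow_nonneg hP0.le _) (by linarith), ← Real.rpow_mul hP0.le,
            show (15 * ε) * ((1 : ℝ) / 5) = 3 * ε by ring]
  have hT2 : (T p 2 H : ℝ)
      ≤ C₂ * h ^ ((49 : ℝ) / 20) * (P ^ (3 * ε) / (15 * ε) ^ ((1 : ℝ) / 5)) :=
    hTb.trans (mul_le_mul_of_nonneg_left hlog (by positivity))
  have combo : (n * h) ^ (2 : ℕ) * (J p L N H : ℝ) * (P * (T p 2 H : ℝ))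
      ≤ (n * h) ^ (2 : ℕ) * (CJ * P ^ ε * (n * h * Γ))
        * (P * (C₂ * h ^ ((49 : ℝ) / 20) * (P ^ (3 * ε) / (15 * ε) ^ ((1 : ℝ) / 5)))) := by
    gcongr
  set Q : ℝ := n ^ (3 : ℕ) * h ^ ((109 : ℝ) / 20) * (P * Γ) with hQdef
  have hQ0 : (0 : ℝ) ≤ Q := by positivity
  have hh109 : h ^ (2 : ℕ) * h * h ^ ((49 : ℝ) / 20) = h ^ ((109 : ℝ) / 20) := by
    rw [← Real.rpow_natCast h 2]
    nth_rewrite 2 [← Real.rpow_one h]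
    rw [← Real.rpow_add hh0, ← Real.rpow_add hh0]
    norm_num
  have lhs_eq : (n * h) ^ (2 : ℕ) * (CJ * P ^ ε * (n * h * Γ))
        * (P * (C₂ * h ^ ((49 : ℝ) / 20) * (P ^ (3 * ε) / (15 * ε) ^ ((1 : ℝ) / 5))))
      = K * P ^ (ε * 4) * Q := by
    have hPe4 : P ^ ε * P ^ (3 * ε) = P ^ (ε * 4) := by
      rw [← Real.rpow_add hP0, show ε + 3 * ε = ε * 4 by ring]
    calc (n * h) ^ (2 : ℕ) * (CJ * P ^ ε * (n * h * Γ))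
          * (P * (C₂ * h ^ ((49 : ℝ) / 20) * (P ^ (3 * ε) / (15 * ε) ^ ((1 : ℝ) / 5))))
        = (CJ * C₂ / (15 * ε) ^ ((1 : ℝ) / 5)) * (P ^ ε * P ^ (3 * ε))
            * (n ^ (3 : ℕ) * (h ^ (2 : ℕ) * h * h ^ ((49 : ℝ) / 20)) * (P * Γ)) := by ring
      _ = K * P ^ (ε * 4) * Q := by rw [hPe4, hh109, hKdef, hQdef]
  have hΔ4 : (Δ ^ ((1 : ℝ) / 4)) ^ (4 : ℕ) = Δ := by
    rw [← Real.rpow_natCast _ 4, ← Real.rpow_mul hΔ0]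
    norm_num
  have hP4 : (P ^ ε) ^ (4 : ℕ) = P ^ (ε * 4) := by
    rw [← Real.rpow_natCast _ 4, ← Real.rpow_mul hP0.le]
    norm_num
  have hs8 : h ^ (4 : ℕ) * h ^ (4 : ℕ) = h ^ ((51 : ℝ) / 20) * h ^ ((109 : ℝ) / 20) := by
    rw [← Real.rpow_natCast h 4, ← Real.rpow_add hh0, ← Real.rpow_add hh0]
    norm_num
  have rhs_eq : (C * n * h * Δ ^ ((1 : ℝ) / 4) * P ^ ε) ^ (4 : ℕ) * h ^ (4 : ℕ)
      = C ^ (4 : ℕ) * P ^ (ε * 4) * Q := by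
    have expand : (C * n * h * Δ ^ ((1 : ℝ) / 4) * P ^ ε) ^ (4 : ℕ) * h ^ (4 : ℕ)
        = C ^ (4 : ℕ) * n ^ (4 : ℕ) * h ^ (4 : ℕ) * ((Δ ^ ((1 : ℝ) / 4)) ^ (4 : ℕ))
          * ((P ^ ε) ^ (4 : ℕ)) * h ^ (4 : ℕ) := by ring
    rw [expand, hΔ4, hP4, hΔdef, hQdef, show ((2 : ℝ) + 11 / 20) = (51 : ℝ) / 20 by norm_num]
    have hns : n * h ^ ((51 : ℝ) / 20) ≠ 0 := by positivity
    have hnI : n * n⁻¹ = 1 := mul_inv_cancel₀ hn0.ne'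
    have hAI : h ^ ((51 : ℝ) / 20) * (h ^ ((51 : ℝ) / 20))⁻¹ = 1 :=
      mul_inv_cancel₀ (by positivity)
    linear_combination (C ^ (4 : ℕ) * n ^ (4 : ℕ) * P * n⁻¹ * (h ^ ((51 : ℝ) / 20))⁻¹ * Γ
        * P ^ (ε * 4)) * hs8
      + (C ^ (4 : ℕ) * n ^ (3 : ℕ) * P * h ^ ((109 : ℝ) / 20) * Γ * P ^ (ε * 4)
        * h ^ ((51 : ℝ) / 20) * (h ^ ((51 : ℝ) / 20))⁻¹) * hnI
      + (C ^ (4 : ℕ) * n ^ (3 : ℕ) * P * h ^ ((109 : ℝ) / 20) * Γ * P ^ (ε * 4)) * hAI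
  have final : K * P ^ (ε * 4) * Q ≤ C ^ (4 : ℕ) * P ^ (ε * 4) * Q := by
    have : K * P ^ (ε * 4) ≤ C ^ (4 : ℕ) * P ^ (ε * 4) :=
      mul_le_mul_of_nonneg_right hC4 (Real.rpow_nonneg hP0.le _)
    exact mul_le_mul_of_nonneg_right this hQ0
  have final2 : S ^ (4 : ℕ) * h ^ (4 : ℕ)
      ≤ (C * n * h * Δ ^ ((1 : ℝ) / 4) * P ^ ε) ^ (4 : ℕ) * h ^ (4 : ℕ) := by
    calc S ^ (4 : ℕ) * h ^ (4 : ℕ) = (h * S) ^ (4 : ℕ) := by ring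
      _ ≤ (n * h) ^ (2 : ℕ) * (J p L N H : ℝ) * (P * (T p 2 H : ℝ)) := big
      _ ≤ (n * h) ^ (2 : ℕ) * (CJ * P ^ ε * (n * h * Γ))
            * (P * (C₂ * h ^ ((49 : ℝ) / 20) * (P ^ (3 * ε) / (15 * ε) ^ ((1 : ℝ) / 5)))) :=
          combo
      _ = K * P ^ (ε * 4) * Q := lhs_eq
      _ ≤ C ^ (4 : ℕ) * P ^ (ε * 4) * Q := final
      _ = (C * n * h * Δ ^ ((1 : ℝ) / 4) * P ^ ε) ^ (4 : ℕ) * h ^ (4 : ℕ) := rhs_eq.symm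
  have final3 : S ^ (4 : ℕ) ≤ (C * n * h * Δ ^ ((1 : ℝ) / 4) * P ^ ε) ^ (4 : ℕ) :=
    le_of_mul_le_mul_right final2 (by positivity)
  have hR0 : (0 : ℝ) ≤ C * n * h * Δ ^ ((1 : ℝ) / 4) * P ^ ε := by positivity
  exact (pow_le_pow_iff_left₀ hS0 hR0 (by norm_num)).mp final3
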